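/- Let X be a nonempty finite state space, U a nonempty finite action space, p a transition kernel on X × U, γ ∈ [0,1), π a policy, and μ a probability mass function on X. Then there exists a unique function d : X → ℝ satisfying the flow equation d(x′) = (1−γ) μ(x′) + γ Σ_{x∈X} Σ_{u∈U} d(x) π(u|x) p(x′|x,u) for all x′ ∈ X; moreover this unique solution satisfies d(x) ≥ 0 for all x ∈ X and Σ_{x∈X} d(x) = 1. (Well-definedness of the discounted state visitation distribution.) -/

import Mathlib

open Finset Filter Topology

/-- **Well-definedness of the discounted state visitation distribution.**
Given a finite MDP `(X, U, p, γ)`, a policy `π`, and an initial distribution `μ`,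
there is a unique `d : X → ℝ` satisfying the flow equation
`d(x') = (1−γ) μ(x') + γ Σ_x Σ_u d(x) π(u|x) p(x'|x,u)` for all `x'`;
moreover this unique solution is nonnegative and sums to `1`. -/
theorem discounted_visitation_exists_unique
    {X U : Type*} [Fintype X] [Fintype U] [Nonempty X] [Nonempty U]
    (γ : ℝ) (hγ0 : 0 ≤ γ) (hγ1 : γ < 1)
    (p : X → U → X → ℝ)
    (hp_nonneg : ∀ x u x', 0 ≤ p x u x')
    (hp_sum : ∀ x u, ∑ x', p x u x' = 1)
    (π : X → U → ℝ)
    (hπ_nonneg : ∀ x u, 0 ≤ π x u) (hπ_sum : ∀ x, ∑ u, π x u = 1)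
    (μ : X → ℝ) (hμ_nonneg : ∀ x, 0 ≤ μ x) (hμ_sum : ∑ x, μ x = 1) :
    (∃! d : X → ℝ,
        ∀ x', d x' = (1 - γ) * μ x' + γ * ∑ x, ∑ u, d x * π x u * p x u x') ∧
      ∀ d : X → ℝ,
        (∀ x', d x' = (1 - γ) * μ x' + γ * ∑ x, ∑ u, d x * π x u * p x u x') →
          (∀ x, 0 ≤ d x) ∧ ∑ x, d x = 1 := by
  classical
  set T : (X → ℝ) → (X → ℝ) := fun d x' =>
    (1 - γ) * μ x' + γ * ∑ x, ∑ u, d x * π x u * p x u x' with hTdef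
  have hsub : ∀ d d' : X → ℝ, ∀ x', T d x' - T d' x' =
      γ * ∑ x, ∑ u, (d x - d' x) * π x u * p x u x' := by
    intro d d' x'
    have h : ∑ x, ∑ u, (d x - d' x) * π x u * p x u x'
        = (∑ x, ∑ u, d x * π x u * p x u x') - ∑ x, ∑ u, d' x * π x u * p x u x' := by
      rw [← Finset.sum_sub_distrib]
      refine Finset.sum_congr rfl fun x _ => ?_
      rw [← Finset.sum_sub_distrib]
      exact Finset.sum_congr rfl fun u _ => by ring
    simp only [T]
    rw [h]; ring
  have hkey : ∀ d d' : X → ℝ,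
      ∑ x', |T d x' - T d' x'| ≤ γ * ∑ x, |d x - d' x| := by
    intro d d'
    calc ∑ x', |T d x' - T d' x'|
        = ∑ x', γ * |∑ x, ∑ u, (d x - d' x) * π x u * p x u x'| := by
          refine Finset.sum_congr rfl fun x' _ => ?_
          rw [hsub, abs_mul, abs_of_nonneg hγ0]
      _ ≤ ∑ x', γ * ∑ x, ∑ u, |d x - d' x| * π x u * p x u x' := by
          refine Finset.sum_le_sum fun x' _ => ?_
          refine mul_le_mul_of_nonneg_left ?_ hγ0
          refine (Finset.abs_sum_le_sum_abs _ _).trans ?_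
          refine Finset.sum_le_sum fun x _ => ?_
          refine (Finset.abs_sum_le_sum_abs _ _).trans ?_
          refine Finset.sum_le_sum fun u _ => ?_
          rw [abs_mul, abs_mul, abs_of_nonneg (hπ_nonneg x u), abs_of_nonneg (hp_nonneg x u x')]
      _ = γ * ∑ x, |d x - d' x| := by
          rw [← Finset.mul_sum]
          congr 1
          rw [Finset.sum_comm]
          refine Finset.sum_congr rfl fun x _ => ?_
          rw [Finset.sum_comm]
          calc ∑ u, ∑ x', |d x - d' x| * π x u * p x u x'
              = ∑ u, |d x - d' x| * π x u := by
                refine Finset.sum_congr rfl fun u _ => ?_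
                rw [← Finset.mul_sum, hp_sum, mul_one]
            _ = |d x - d' x| := by rw [← Finset.mul_sum, hπ_sum, mul_one]
  -- work in L¹
  let E := PiLp 1 (fun _ : X => ℝ)
  let k : NNReal := ⟨γ, hγ0⟩
  let T' : E → E := fun f => WithLp.toLp 1 (T f)
  have hdist : ∀ f g : E, dist f g = ∑ x, |f x - g x| := by
    intro f g
    rw [PiLp.dist_eq_sum (by simp : (0:ℝ) < ENNReal.toReal 1)]
    simp only [ENNReal.toReal_one, Real.rpow_one, Real.dist_eq, one_div_one]
  have hLip : LipschitzWith k T' := by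
    apply LipschitzWith.of_dist_le_mul
    intro f g
    rw [hdist, hdist]
    exact hkey f g
  have hC : ContractingWith k T' := ⟨by exact_mod_cast hγ1, hLip⟩
  let d₀ : X → ℝ := ContractingWith.fixedPoint (α := E) T' hC
  have hfix : T d₀ = d₀ := congrArg WithLp.ofLp hC.fixedPoint_isFixedPt
  have hd₀eq : ∀ x', d₀ x' = (1 - γ) * μ x' + γ * ∑ x, ∑ u, d₀ x * π x u * p x u x' :=
    fun x' => (congrFun hfix x').symm
  have huniq : ∀ d : X → ℝ,
      (∀ x', d x' = (1 - γ) * μ x' + γ * ∑ x, ∑ u, d x * π x u * p x u x') → d = d₀ := by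
    intro d hd
    exact congrArg WithLp.ofLp (hC.fixedPoint_unique (x := WithLp.toLp 1 d) (congrArg (WithLp.toLp 1) (funext fun x' => (hd x').symm)))
  have hTpos : ∀ d : X → ℝ, (∀ x, 0 ≤ d x) → ∀ x', 0 ≤ T d x' := by
    intro d hd x'
    have h1 : (0:ℝ) ≤ (1 - γ) * μ x' := mul_nonneg (by linarith) (hμ_nonneg x')
    have h2 : (0:ℝ) ≤ ∑ x, ∑ u, d x * π x u * p x u x' :=
      Finset.sum_nonneg fun x _ => Finset.sum_nonneg fun u _ =>
        mul_nonneg (mul_nonneg (hd x) (hπ_nonneg x u)) (hp_nonneg x u x')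
    exact add_nonneg h1 (mul_nonneg hγ0 h2)
  have hiter : ∀ n, ∀ x, 0 ≤ (T'^[n] (0:E)) x := by
    intro n
    induction n with
    | zero => intro x; exact le_rfl
    | succ n ih =>
        intro x
        rw [Function.iterate_succ_apply']
        exact hTpos _ ih x
  have hd₀nn : ∀ x, 0 ≤ d₀ x := by
    intro x
    have hev : Continuous (fun f : E => f x) := by
      exact (continuous_apply x).comp (PiLp.continuous_ofLp _ _)
    have htend : Tendsto (fun n => (T'^[n] (0:E)) x) atTop (𝓝 (d₀ x)) :=
      (hev.tendsto _).comp (hC.tendsto_iterate_fixedPoint (0:E))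
    exact ge_of_tendsto' htend fun n => hiter n x
  have hsum : ∀ d : X → ℝ,
      (∀ x', d x' = (1 - γ) * μ x' + γ * ∑ x, ∑ u, d x * π x u * p x u x') →
      ∑ x, d x = 1 := by
    intro d hd
    have h : ∑ x', d x' = (1 - γ) + γ * ∑ x, d x := by
      calc ∑ x', d x' = ∑ x', ((1 - γ) * μ x' + γ * ∑ x, ∑ u, d x * π x u * p x u x') :=
            Finset.sum_congr rfl fun x' _ => hd x'
        _ = (1 - γ) * ∑ x', μ x' + γ * ∑ x', ∑ x, ∑ u, d x * π x u * p x u x' := by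
            rw [Finset.sum_add_distrib, ← Finset.mul_sum, ← Finset.mul_sum]
        _ = (1 - γ) + γ * ∑ x, d x := by
            rw [hμ_sum, mul_one]
            congr 2
            rw [Finset.sum_comm]
            refine Finset.sum_congr rfl fun x _ => ?_
            rw [Finset.sum_comm]
            calc ∑ u, ∑ x', d x * π x u * p x u x'
                = ∑ u, d x * π x u := by
                  refine Finset.sum_congr rfl fun u _ => ?_
                  rw [← Finset.mul_sum, hp_sum, mul_one]
              _ = d x := by rw [← Finset.mul_sum, hπ_sum, mul_one]
    have h2 : (1 - γ) * (∑ x, d x - 1) = 0 := by nlinarith [h]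
    rcases mul_eq_zero.mp h2 with h3 | h3
    · linarith
    · linarith
  refine ⟨⟨d₀, hd₀eq, fun d hd => huniq d hd⟩, fun d hd => ⟨?_, hsum d hd⟩⟩
  rw [huniq d hd]
  exact hd₀nn
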